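/- If x → x' is a move in NIM(k+1,k) (i.e., x' = x − e^{(i)} componentwise where exactly one coordinate i is kept and all other k coordinates are decreased by 1, all of them being positive in x), then B(x') ≤ B(x). -/

import Mathlib

/-- `z` is a basic position with parameter `b`: coordinate sum `k*b`, all coordinates
at most `b`, all coordinates even if `b` is even, exactly one even if `b` is odd. -/
def IsBasic (k : ℕ) (z : Fin (k+1) → ℕ) (b : ℕ) : Prop :=
  (∑ i, z i) = k * b ∧ (∀ i, z i ≤ b) ∧
    (Even b → ∀ i, Even (z i)) ∧ (Odd b → ∃! i, Even (z i))

/-- `Pre k y x` means `y ⪯ x`: the sorted vector of `y` is componentwise ≤ that of `x`. -/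
def Pre (k : ℕ) (y x : Fin (k+1) → ℕ) : Prop :=
  ∀ i, (y ∘ Tuple.sort y) i ≤ (x ∘ Tuple.sort x) i

/-- `BVal k x = max { b : some basic z with parameter b satisfies z ⪯ x }`. -/
noncomputable def BVal (k : ℕ) (x : Fin (k+1) → ℕ) : ℕ :=
  sSup {b | ∃ z, IsBasic k z b ∧ Pre k z x}

/-- A move in NIM(k+1,k): keep coordinate `i`, decrease every other (positive) coordinate by 1. -/
def MoveK (k : ℕ) (x y : Fin (k+1) → ℕ) : Prop :=
  ∃ i, (∀ j, j ≠ i → 0 < x j) ∧ ∀ j, y j = if j = i then x j else x j - 1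

/-- The M-move: keep a smallest even coordinate if one exists, otherwise keep a
largest coordinate; decrease the other k (positive) coordinates by 1. -/
def MMove (k : ℕ) (x y : Fin (k+1) → ℕ) : Prop :=
  ∃ i, (∀ j, j ≠ i → 0 < x j) ∧
    ((∃ j, Even (x j)) → Even (x i) ∧ ∀ j, Even (x j) → x i ≤ x j) ∧
    ((∀ j, Odd (x j)) → ∀ j, x j ≤ x i) ∧
    (∀ j, y j = if j = i then x j else x j - 1)

/-- Exceptional position: all coordinates odd, all `< m`, and `|x| = k*m + k - 1`
for some even `m`. -/
def Exceptional (k : ℕ) (x : Fin (k+1) → ℕ) : Prop :=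
  ∃ m, Even m ∧ (∀ i, Odd (x i)) ∧ (∀ i, x i < m) ∧ (∑ i, x i) = k * m + k - 1

/-- `MVal k x m`: playing the M-rule from `x`, the game ends after exactly `m` moves. -/
inductive MVal (k : ℕ) : (Fin (k+1) → ℕ) → ℕ → Prop
  | zero (x) : (¬ ∃ y, MoveK k x y) → MVal k x 0
  | succ (x y m) : MMove k x y → MVal k y m → MVal k x (m + 1)


lemma sorted_mono {n : ℕ} [NeZero n] (y x : Fin n → ℕ) (h : ∀ j, y j ≤ x j) :
    ∀ i, (y ∘ Tuple.sort y) i ≤ (x ∘ Tuple.sort x) i := by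
  intro i
  by_contra hc
  push_neg at hc
  set f := y ∘ Tuple.sort y with hf
  set g := x ∘ Tuple.sort x with hg
  have hfm : Monotone f := Tuple.monotone_sort y
  have hgm : Monotone g := Tuple.monotone_sort x
  have hS : ∀ j ∈ Finset.image (Tuple.sort x) (Finset.Iic i), y j < f i := by
    intro j hj
    simp only [Finset.mem_image, Finset.mem_Iic] at hj
    obtain ⟨p, hp, rfl⟩ := hj
    calc y (Tuple.sort x p) ≤ x (Tuple.sort x p) := h _
      _ = g p := rfl
      _ ≤ g i := hgm hp
      _ < f i := hc
  have hsub : Finset.image (Tuple.sort x) (Finset.Iic i) ⊆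
      Finset.univ.filter (fun j => y j < f i) := by
    intro j hj
    simp only [Finset.mem_filter, Finset.mem_univ, true_and]
    exact hS j hj
  have hcard1 : i.val + 1 ≤ (Finset.univ.filter (fun j => y j < f i)).card := by
    have := Finset.card_le_card hsub
    rwa [Finset.card_image_of_injective _ (Tuple.sort x).injective, Fin.card_Iic] at this
  have hcard2 : (Finset.univ.filter (fun j => y j < f i)).card ≤ i.val := by
    have := Finset.card_le_card_of_injOn (fun j => (Tuple.sort y).symm j)
      (s := Finset.univ.filter (fun j => y j < f i)) (t := Finset.Iio i)
      (by
        intro j hj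
        simp only [Finset.mem_coe, Finset.mem_filter, Finset.mem_univ, true_and] at hj
        simp only [Finset.mem_coe, Finset.mem_Iio]
        by_contra hge
        push_neg at hge
        have : f i ≤ f ((Tuple.sort y).symm j) := hfm hge
        have : f ((Tuple.sort y).symm j) = y j := by
          simp [hf, Function.comp]
        omega)
      (fun a _ b _ hab => (Tuple.sort y).symm.injective hab)
    rwa [Fin.card_Iio] at this
  omega

theorem stmt7 (k : ℕ) (hk : 2 ≤ k) (x x' : Fin (k+1) → ℕ)
    (h : MoveK k x x') : BVal k x' ≤ BVal k x := by
  obtain ⟨i, hpos, hx'⟩ := h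
  have hle : ∀ j, x' j ≤ x j := by
    intro j; rw [hx' j]; split <;> omega
  have hsub : {b | ∃ z, IsBasic k z b ∧ Pre k z x'} ⊆ {b | ∃ z, IsBasic k z b ∧ Pre k z x} := by
    rintro b ⟨z, hz, hpre⟩
    exact ⟨z, hz, fun j => (hpre j).trans (sorted_mono x' x hle j)⟩
  have hbdd : BddAbove {b | ∃ z, IsBasic k z b ∧ Pre k z x} := by
    refine ⟨∑ j, x j, ?_⟩
    rintro b ⟨z, ⟨hsum, _⟩, hpre⟩
    have h1 : (∑ j, z j) ≤ ∑ j, x j := by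
      rw [← Equiv.sum_comp (Tuple.sort z) z, ← Equiv.sum_comp (Tuple.sort x) x]
      exact Finset.sum_le_sum fun j _ => hpre j
    have : b ≤ k * b := Nat.le_mul_of_pos_left b (by omega)
    omega
  rcases Set.eq_empty_or_nonempty {b | ∃ z, IsBasic k z b ∧ Pre k z x'} with he | hne
  · simp [BVal, he]
  · exact csSup_le_csSup hbdd hne hsub
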